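/- Let M be a maximum matching of a finite bipartite graph G = (V, F, E) with coarse decomposition (T_I, T_C, T_O). Then no edge of E joins a vertex in T_I ∩ V with a vertex in (T_C ∪ T_O) ∩ F, and no edge of E joins a vertex in T_C ∩ V with a vertex in T_O ∩ F. -/

import Mathlib

variable {F V : Type*} [Fintype F] [Fintype V] [DecidableEq F] [DecidableEq V]

/-- `M` is a matching of the bipartite graph with edge set `E`:
`M ⊆ E` and no two edges of `M` share an endpoint. -/
def IsMatching (E M : Finset (F × V)) : Prop :=
  M ⊆ E ∧ (∀ e ∈ M, ∀ e' ∈ M, e.1 = e'.1 → e = e') ∧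
    ∀ e ∈ M, ∀ e' ∈ M, e.2 = e'.2 → e = e'

/-- `M` is a maximum matching: a matching of greatest cardinality. -/
def IsMaxMatching (E M : Finset (F × V)) : Prop :=
  IsMatching E M ∧ ∀ M' : Finset (F × V), IsMatching E M' → M'.card ≤ M.card

/-- The (symmetric) adjacency relation of the bipartite graph on `F ⊕ V`. -/
def sumAdj (E : Finset (F × V)) : (F ⊕ V) → (F ⊕ V) → Prop
  | Sum.inl f, Sum.inr v => (f, v) ∈ E
  | Sum.inr v, Sum.inl f => (f, v) ∈ E
  | _, _ => False

/-- The pair of consecutive path vertices forms an edge belonging to `M`. -/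
def pairInM (M : Finset (F × V)) : (F ⊕ V) × (F ⊕ V) → Prop
  | (Sum.inl f, Sum.inr v) => (f, v) ∈ M
  | (Sum.inr v, Sum.inl f) => (f, v) ∈ M
  | _ => False

/-- `l` is an `M`-alternating path in the bipartite graph with edge set `E`:
a nonempty sequence of distinct vertices in which consecutive vertices are joined
by edges of `E` lying alternately inside and outside `M`. -/
def IsAltPath (E M : Finset (F × V)) (l : List (F ⊕ V)) : Prop :=
  l ≠ [] ∧ l.Nodup ∧ l.Chain' (sumAdj E) ∧
    (l.zip l.tail).Chain' fun e e' => pairInM M e ↔ ¬ pairInM M e'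

/-- `v ∈ V` is not an endpoint of any edge of `M`. -/
def VUnmatched (M : Finset (F × V)) (v : V) : Prop := ∀ f, (f, v) ∉ M

/-- `f ∈ F` is not an endpoint of any edge of `M`. -/
def FUnmatched (M : Finset (F × V)) (f : F) : Prop := ∀ v, (f, v) ∉ M

/-- The incomplete set `T_I`: all vertices reachable from some `M`-unmatched
vertex of `V` by a (possibly trivial) `M`-alternating path. -/
def incompleteSet (E M : Finset (F × V)) : Set (F ⊕ V) :=
  {x | ∃ v : V, VUnmatched M v ∧ ∃ l : List (F ⊕ V),
    IsAltPath E M l ∧ l.head? = some (Sum.inr v) ∧ l.getLast? = some x}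

/-- The overcomplete set `T_O`: all vertices reachable from some `M`-unmatched
vertex of `F` by a (possibly trivial) `M`-alternating path. -/
def overcompleteSet (E M : Finset (F × V)) : Set (F ⊕ V) :=
  {x | ∃ f : F, FUnmatched M f ∧ ∃ l : List (F ⊕ V),
    IsAltPath E M l ∧ l.head? = some (Sum.inl f) ∧ l.getLast? = some x}

/-- The complete set `T_C = (V ∪ F) \ (T_I ∪ T_O)`. -/
def completeSet (E M : Finset (F × V)) : Set (F ⊕ V) :=
  Set.univ \ (incompleteSet E M ∪ overcompleteSet E M)


/-! ### Auxiliary machinery -/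

lemma pairInM_swap (M : Finset (F × V)) (x y : F ⊕ V) :
    pairInM M (x, y) ↔ pairInM M (y, x) := by
  cases x <;> cases y <;> simp [pairInM]

lemma sumAdj_swap (E : Finset (F × V)) (x y : F ⊕ V) :
    sumAdj E x y ↔ sumAdj E y x := by
  cases x <;> cases y <;> simp [sumAdj]

lemma sumAdj_isRight {E : Finset (F × V)} {x y : F ⊕ V} (h : sumAdj E x y) :
    y.isRight = !x.isRight := by
  cases x <;> cases y <;> simp_all [sumAdj]

/-- Index-based reformulation of `IsAltPath`. -/
def AltP (E M : Finset (F × V)) (l : List (F ⊕ V)) : Prop :=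
  l ≠ [] ∧ l.Nodup ∧
    (∀ i (h : i + 1 < l.length), sumAdj E (l[i]'(by omega)) (l[i+1]'h)) ∧
    (∀ i (h : i + 2 < l.length),
      (pairInM M (l[i]'(by omega), l[i+1]'(by omega)) ↔
        ¬ pairInM M (l[i+1]'(by omega), l[i+2]'h)))

lemma chain'_iff_idx {α : Type*} (R : α → α → Prop) (l : List α) :
    l.Chain' R ↔ ∀ (i : ℕ) (h : i + 1 < l.length), R (l[i]'(by omega)) (l[i+1]'h) := by
  show List.IsChain R l ↔ _
  rw [List.isChain_iff_getElem]

lemma isAltPath_iff {E M : Finset (F × V)} {l : List (F ⊕ V)} :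
    IsAltPath E M l ↔ AltP E M l := by
  unfold IsAltPath AltP
  refine and_congr_right fun hne => and_congr_right fun hnd => ?_
  rw [chain'_iff_idx, chain'_iff_idx]
  refine and_congr_right fun _ => ?_
  have hlen : (l.zip l.tail).length = l.length - 1 := by
    simp [List.length_zip, List.length_tail]
  constructor
  · intro H i h
    have hz : i + 1 < (l.zip l.tail).length := by omega
    have := H i hz
    simpa [List.getElem_zip, List.getElem_tail] using this
  · intro H i hz
    have h : i + 2 < l.length := by omega
    have := H i h
    simpa [List.getElem_zip, List.getElem_tail] using this

lemma head?_of_getElem {α : Type*} {l : List α} (h : l ≠ []) :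
    l.head? = some (l[0]'(List.length_pos_iff.mpr h)) := by
  rw [List.head?_eq_head h, l.head_eq_getElem h]

lemma getLast?_of_getElem {α : Type*} {l : List α} (h : l ≠ []) :
    l.getLast? = some (l[l.length - 1]'(by have := List.length_pos_iff.mpr h; omega)) := by
  rw [List.getLast?_eq_getLast h, l.getLast_eq_getElem h]

/-- Types of vertices along a path alternate. -/
lemma type_alt {E M : Finset (F × V)} {l : List (F ⊕ V)} (hA : AltP E M l) :
    ∀ i (h : i < l.length),
      (l[i]'h).isRight = ((l[0]'(by omega)).isRight == decide (Even i)) := by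
  intro i
  induction i with
  | zero => intro h; simp
  | succ n ih =>
    intro h
    have hn : n < l.length := by omega
    have hadj : sumAdj E (l[n]'hn) (l[n+1]'h) := hA.2.2.1 n h
    rw [sumAdj_isRight hadj, ih hn]
    have hdec : decide (Even (n+1)) = !decide (Even n) := by
      simp [Nat.even_add_one, ← Nat.not_even_iff_odd]
    rw [hdec]
    rcases Bool.eq_false_or_eq_true (l[0]'(by omega)).isRight with h0 | h0 <;>
      rcases Bool.eq_false_or_eq_true (decide (Even n)) with h1 | h1 <;>
        simp [h0, h1]

lemma type_alt_inr {E M : Finset (F × V)} {l : List (F ⊕ V)} (hA : AltP E M l)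
    {v₀ : V} (h0 : l[0]'(List.length_pos_iff.mpr hA.1) = Sum.inr v₀) :
    ∀ i (h : i < l.length), (l[i]'h).isRight = decide (Even i) := by
  intro i h
  have := type_alt hA i h
  rw [h0] at this
  simpa using this

lemma type_alt_inl {E M : Finset (F × V)} {l : List (F ⊕ V)} (hA : AltP E M l)
    {f₀ : F} (h0 : l[0]'(List.length_pos_iff.mpr hA.1) = Sum.inl f₀) :
    ∀ i (h : i < l.length), (l[i]'h).isRight = !decide (Even i) := by
  intro i h
  have := type_alt hA i h
  rw [h0] at this
  simpa using this

/-- Edges of a path whose first edge is not in `M` alternate: edge `i` is in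
`M` iff `i` is odd. -/
lemma edge_parity {E M : Finset (F × V)} {l : List (F ⊕ V)} (hA : AltP E M l)
    (h0 : ∀ (h : 1 < l.length), ¬ pairInM M (l[0]'(by omega), l[1]'h)) :
    ∀ i (h : i + 1 < l.length),
      (pairInM M (l[i]'(by omega), l[i+1]'h) ↔ Odd i) := by
  intro i
  induction i with
  | zero => intro h; simp [h0 h, Nat.odd_iff]
  | succ n ih =>
    intro h
    have hn : n + 1 < l.length := by omega
    have halt := hA.2.2.2 n (by omega)
    have hih := ih hn
    have hodd : Odd (n+1) ↔ ¬ Odd n := by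
      simp [Nat.odd_iff]; omega
    rw [hodd]
    tauto

lemma start_unmatched_inr {M : Finset (F × V)} {l : List (F ⊕ V)} {v₀ : V}
    (hv : VUnmatched M v₀) (hl : 0 < l.length) (h0 : l[0]'hl = Sum.inr v₀) :
    ∀ (h : 1 < l.length), ¬ pairInM M (l[0]'(by omega), l[1]'h) := by
  intro h
  rw [h0]
  rcases h1 : l[1]'h with f | v
  · simpa [pairInM] using hv f
  · simp [pairInM]

lemma start_unmatched_inl {M : Finset (F × V)} {l : List (F ⊕ V)} {f₀ : F}
    (hf : FUnmatched M f₀) (hl : 0 < l.length) (h0 : l[0]'hl = Sum.inl f₀) :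
    ∀ (h : 1 < l.length), ¬ pairInM M (l[0]'(by omega), l[1]'h) := by
  intro h
  rw [h0]
  rcases h1 : l[1]'h with f | v
  · simp [pairInM]
  · simpa [pairInM] using hf v

/-- A nonempty prefix of an alternating path is an alternating path. -/
lemma altP_take {E M : Finset (F × V)} {l : List (F ⊕ V)} (hA : AltP E M l)
    {n : ℕ} (hn : 0 < n) : AltP E M (l.take n) := by
  obtain ⟨hne, hnd, hc, hm⟩ := hA
  have hlen : 0 < l.length := List.length_pos_iff.mpr hne
  refine ⟨?_, hnd.sublist (List.take_sublist n l), ?_, ?_⟩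
  · apply List.ne_nil_of_length_pos
    simp [List.length_take]; omega
  · intro i h
    simp only [List.length_take] at h
    have h1 : i + 1 < l.length := by omega
    simpa [List.getElem_take] using hc i h1
  · intro i h
    simp only [List.length_take] at h
    have h1 : i + 2 < l.length := by omega
    simpa [List.getElem_take] using hm i h1

/-- Extending an alternating path by one new vertex. -/
lemma altP_append {E M : Finset (F × V)} {l : List (F ⊕ V)} (hA : AltP E M l)
    (hlen : 0 < l.length) {x : F ⊕ V} (hx : x ∉ l)
    (hadj : sumAdj E (l[l.length - 1]'(by omega)) x)
    (halt : ∀ (h : 2 ≤ l.length),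
      (pairInM M (l[l.length - 2]'(by omega), l[l.length - 1]'(by omega)) ↔
        ¬ pairInM M (l[l.length - 1]'(by omega), x))) :
    AltP E M (l ++ [x]) := by
  obtain ⟨hne, hnd, hc, hm⟩ := hA
  have hL : (l ++ [x]).length = l.length + 1 := by simp
  have hgl : ∀ i (h : i < l.length), (l ++ [x])[i]'(by simp; omega) = l[i]'h := by
    intro i h; exact List.getElem_append_left ..
  have hgx : (l ++ [x])[l.length]'(by simp) = x := by
    rw [List.getElem_append_right (le_refl _)]; simp
  refine ⟨by simp, ?_, ?_, ?_⟩
  · exact List.nodup_append.mpr ⟨hnd, List.nodup_singleton x, fun a ha b hb hab => hx (by rw [List.mem_singleton] at hb; rw [← hb, ← hab]; exact ha)⟩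
  · intro i h
    rw [hL] at h
    rcases Nat.lt_or_ge (i+1) l.length with h1 | h1
    · rw [hgl i (by omega), hgl (i+1) h1]
      exact hc i h1
    · have hi : i = l.length - 1 := by omega
      have hi1 : i + 1 = l.length := by omega
      subst hi
      rw [hgl _ (by omega)]
      have : (l ++ [x])[l.length - 1 + 1]'(by simp; omega) =
          (l ++ [x])[l.length]'(by simp) := by
        congr 1 <;> omega
      rw [this, hgx]
      exact hadj
  · intro i h
    rw [hL] at h
    rcases Nat.lt_or_ge (i+2) l.length with h2 | h2
    · rw [hgl i (by omega), hgl (i+1) (by omega), hgl (i+2) h2]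
      exact hm i h2
    · have hi2 : i + 2 = l.length := by omega
      have e1 : (l ++ [x])[i]'(by simp; omega) = l[i]'(by omega) := hgl i (by omega)
      have e2 : (l ++ [x])[i+1]'(by simp; omega) = l[i+1]'(by omega) := hgl (i+1) (by omega)
      have e3 : (l ++ [x])[i+2]'(by simp; omega) = x := by
        have h5 : (l ++ [x])[i+2]'(by simp; omega) = (l ++ [x])[l.length]'(by simp) := by
          congr 1 <;> omega
        rw [h5, hgx]
      rw [e1, e2, e3]
      have hh := halt (by omega)
      have e4 : l[l.length - 2]'(by omega) = l[i]'(by omega) := by congr 1 <;> omega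
      have e5 : l[l.length - 1]'(by omega) = l[i+1]'(by omega) := by congr 1 <;> omega
      rw [e4, e5] at hh
      exact hh

/-- If `v ∈ T_I` and `(f,v) ∈ E` then `f ∈ T_I`. -/
lemma incomplete_extend {E M : Finset (F × V)} (hMat : IsMatching E M) {f : F} {v : V}
    (hE : (f, v) ∈ E) (hv : Sum.inr v ∈ incompleteSet E M) :
    Sum.inl f ∈ incompleteSet E M := by
  classical
  obtain ⟨v₀, hv₀, l, hl, hhead, hlast⟩ := hv
  rw [isAltPath_iff] at hl
  have hne := hl.1
  have hlen : 0 < l.length := List.length_pos_iff.mpr hne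
  have h0 : l[0]'hlen = Sum.inr v₀ := by
    rw [head?_of_getElem hne] at hhead
    exact Option.some.inj hhead
  have hlastE : l[l.length - 1]'(by omega) = Sum.inr v := by
    rw [getLast?_of_getElem hne] at hlast
    exact Option.some.inj hlast
  rcases Classical.em (Sum.inl f ∈ l) with hf | hf
  · obtain ⟨i, hi, hif⟩ := List.getElem_of_mem hf
    have hA' := altP_take hl (n := i+1) (by omega)
    have hne' : l.take (i+1) ≠ [] := hA'.1
    have hlen' : (l.take (i+1)).length = i + 1 := by simp [List.length_take]; omega
    refine ⟨v₀, hv₀, l.take (i+1), isAltPath_iff.mpr hA', ?_, ?_⟩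
    · rw [head?_of_getElem hne']
      congr 1
      simpa [List.getElem_take] using h0
    · rw [getLast?_of_getElem hne']
      congr 1
      have : (l.take (i+1))[(l.take (i+1)).length - 1]'(by omega) =
          (l.take (i+1))[i]'(by omega) := by congr 1; omega
      rw [this]
      simpa [List.getElem_take] using hif
  · -- append `inl f` at the end
    have hpar := edge_parity hl (start_unmatched_inr hv₀ hlen h0)
    have htyp := type_alt_inr hl h0
    have hEvenLast : Even (l.length - 1) := by
      have := htyp (l.length - 1) (by omega)
      rw [hlastE] at this
      simpa using this
    have hfvM : (f, v) ∉ M := by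
      intro hmem
      rcases Nat.lt_or_ge l.length 2 with h2 | h2
      · -- l = [inr v₀], so v = v₀ unmatched
        have : l[l.length - 1]'(by omega) = l[0]'hlen := by congr 1; omega
        rw [hlastE, h0] at this
        exact hv₀ f (by rwa [Sum.inr.inj this] at hmem)
      · have hodd : Odd (l.length - 2) := by
          rcases hEvenLast with ⟨m, hm⟩
          refine ⟨m - 1, by omega⟩
        have hpair : pairInM M (l[l.length - 2]'(by omega), l[l.length - 2 + 1]'(by omega)) :=
          (hpar (l.length - 2) (by omega)).mpr hodd
        have hOddP : ¬ Even (l.length - 2) := by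
          rcases hodd with ⟨m, hm⟩
          rintro ⟨m', hm'⟩; omega
        have hLft : (l[l.length - 2]'(by omega)).isRight = false := by
          rw [htyp (l.length - 2) (by omega)]
          simpa using hOddP
        obtain ⟨f', hf'⟩ := Sum.isLeft_iff.mp (by simp [Sum.isLeft_iff] at hLft ⊢; exact hLft)
        have hidx : (l[l.length - 2 + 1]'(by omega)) = Sum.inr v := by
          have : (l[l.length - 2 + 1]'(by omega)) = l[l.length - 1]'(by omega) := by
            congr 1; omega
          rw [this, hlastE]
        rw [hf', hidx] at hpair
        have hf'M : (f', v) ∈ M := hpair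
        have := hMat.2.2 (f, v) hmem (f', v) hf'M rfl
        have hff' : f = f' := by
          have := congrArg Prod.fst this; simpa using this
        apply hf
        rw [hff', ← hf']
        exact List.getElem_mem _
    have hA' : AltP E M (l ++ [Sum.inl f]) := by
      refine altP_append hl hlen hf ?_ ?_
      · rw [hlastE]; exact hE
      · intro h2
        have hodd : Odd (l.length - 2) := by
          rcases hEvenLast with ⟨m, hm⟩
          exact ⟨m - 1, by omega⟩
        have hpair : pairInM M (l[l.length - 2]'(by omega), l[l.length - 2 + 1]'(by omega)) :=
          (hpar (l.length - 2) (by omega)).mpr hodd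
        have hidx : (l[l.length - 2 + 1]'(by omega)) = l[l.length - 1]'(by omega) := by
          congr 1; omega
        rw [hidx] at hpair
        rw [hlastE]
        simp only [pairInM]
        constructor
        · intro _ hc; exact hfvM hc
        · intro _; rw [← hlastE]; exact hpair
    refine ⟨v₀, hv₀, l ++ [Sum.inl f], isAltPath_iff.mpr hA', ?_, ?_⟩
    · have hne' : l ++ [Sum.inl f] ≠ [] := by simp
      rw [head?_of_getElem hne']
      congr 1
      rw [List.getElem_append_left hlen]
      exact h0
    · exact List.getLast?_concat

/-- If `f ∈ T_O` and `(f,v) ∈ E` then `v ∈ T_O`. -/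
lemma overcomplete_extend {E M : Finset (F × V)} (hMat : IsMatching E M) {f : F} {v : V}
    (hE : (f, v) ∈ E) (hf : Sum.inl f ∈ overcompleteSet E M) :
    Sum.inr v ∈ overcompleteSet E M := by
  classical
  obtain ⟨f₀, hf₀, l, hl, hhead, hlast⟩ := hf
  rw [isAltPath_iff] at hl
  have hne := hl.1
  have hlen : 0 < l.length := List.length_pos_iff.mpr hne
  have h0 : l[0]'hlen = Sum.inl f₀ := by
    rw [head?_of_getElem hne] at hhead
    exact Option.some.inj hhead
  have hlastE : l[l.length - 1]'(by omega) = Sum.inl f := by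
    rw [getLast?_of_getElem hne] at hlast
    exact Option.some.inj hlast
  rcases Classical.em (Sum.inr v ∈ l) with hvmem | hvmem
  · obtain ⟨i, hi, hif⟩ := List.getElem_of_mem hvmem
    have hA' := altP_take hl (n := i+1) (by omega)
    have hne' : l.take (i+1) ≠ [] := hA'.1
    have hlen' : (l.take (i+1)).length = i + 1 := by simp [List.length_take]; omega
    refine ⟨f₀, hf₀, l.take (i+1), isAltPath_iff.mpr hA', ?_, ?_⟩
    · rw [head?_of_getElem hne']
      congr 1
      simpa [List.getElem_take] using h0
    · rw [getLast?_of_getElem hne']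
      congr 1
      have : (l.take (i+1))[(l.take (i+1)).length - 1]'(by omega) =
          (l.take (i+1))[i]'(by omega) := by congr 1; omega
      rw [this]
      simpa [List.getElem_take] using hif
  · have hpar := edge_parity hl (start_unmatched_inl hf₀ hlen h0)
    have htyp := type_alt_inl hl h0
    have hEvenLast : Even (l.length - 1) := by
      have := htyp (l.length - 1) (by omega)
      rw [hlastE] at this
      simp at this
      exact this
    have hfvM : (f, v) ∉ M := by
      intro hmem
      rcases Nat.lt_or_ge l.length 2 with h2 | h2
      · have : l[l.length - 1]'(by omega) = l[0]'hlen := by congr 1; omega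
        rw [hlastE, h0] at this
        exact hf₀ v (by rwa [Sum.inl.inj this] at hmem)
      · have hodd : Odd (l.length - 2) := by
          rcases hEvenLast with ⟨m, hm⟩
          exact ⟨m - 1, by omega⟩
        have hpair : pairInM M (l[l.length - 2]'(by omega), l[l.length - 2 + 1]'(by omega)) :=
          (hpar (l.length - 2) (by omega)).mpr hodd
        have hOddP : ¬ Even (l.length - 2) := by
          rcases hodd with ⟨m, hm⟩
          rintro ⟨m', hm'⟩; omega
        have hRgt : (l[l.length - 2]'(by omega)).isRight = true := by
          rw [htyp (l.length - 2) (by omega)]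
          simpa using hOddP
        obtain ⟨v', hv'⟩ := Sum.isRight_iff.mp hRgt
        have hidx : (l[l.length - 2 + 1]'(by omega)) = Sum.inl f := by
          have : (l[l.length - 2 + 1]'(by omega)) = l[l.length - 1]'(by omega) := by
            congr 1; omega
          rw [this, hlastE]
        rw [hv', hidx] at hpair
        have hf'M : (f, v') ∈ M := hpair
        have := hMat.2.1 (f, v) hmem (f, v') hf'M rfl
        have hvv' : v = v' := by
          have := congrArg Prod.snd this; simpa using this
        apply hvmem
        rw [hvv', ← hv']
        exact List.getElem_mem _
    have hA' : AltP E M (l ++ [Sum.inr v]) := by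
      refine altP_append hl hlen hvmem ?_ ?_
      · rw [hlastE]; exact hE
      · intro h2
        have hodd : Odd (l.length - 2) := by
          rcases hEvenLast with ⟨m, hm⟩
          exact ⟨m - 1, by omega⟩
        have hpair : pairInM M (l[l.length - 2]'(by omega), l[l.length - 2 + 1]'(by omega)) :=
          (hpar (l.length - 2) (by omega)).mpr hodd
        have hidx : (l[l.length - 2 + 1]'(by omega)) = l[l.length - 1]'(by omega) := by
          congr 1; omega
        rw [hidx] at hpair
        rw [hlastE]
        simp only [pairInM]
        constructor
        · intro _ hc; exact hfvM hc
        · intro _; rw [← hlastE]; exact hpair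
    refine ⟨f₀, hf₀, l ++ [Sum.inr v], isAltPath_iff.mpr hA', ?_, ?_⟩
    · have hne' : l ++ [Sum.inr v] ≠ [] := by simp
      rw [head?_of_getElem hne']
      congr 1
      rw [List.getElem_append_left hlen]
      exact h0
    · exact List.getLast?_concat

/-- A maximum matching admits no augmenting path (abstract form). -/
lemma no_augmenting {E M : Finset (F × V)} (hM : IsMaxMatching E M)
    (k : ℕ) (a : ℕ → V) (b : ℕ → F)
    (ha : ∀ i ≤ k, ∀ j ≤ k, a i = a j → i = j)
    (hb : ∀ i ≤ k, ∀ j ≤ k, b i = b j → i = j)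
    (hout : ∀ j ≤ k, (b j, a j) ∈ E ∧ (b j, a j) ∉ M)
    (hin : ∀ j < k, (b j, a (j+1)) ∈ M)
    (ha0 : VUnmatched M (a 0)) (hbk : FUnmatched M (b k)) : False := by
  classical
  set Modd : Finset (F × V) := (Finset.range k).image (fun j => (b j, a (j+1))) with hModd
  set Meven : Finset (F × V) := (Finset.range (k+1)).image (fun j => (b j, a j)) with hMeven
  set M' := (M \ Modd) ∪ Meven with hM'
  have hmemO : ∀ e, e ∈ Modd ↔ ∃ j < k, (b j, a (j+1)) = e := by
    intro e; simp [hModd]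
  have hmemE : ∀ e, e ∈ Meven ↔ ∃ j ≤ k, (b j, a j) = e := by
    intro e; simp [hMeven, Nat.lt_succ_iff]
  have hModdM : Modd ⊆ M := by
    intro e he
    obtain ⟨j, hj, rfl⟩ := (hmemO e).mp he
    exact hin j hj
  have hMevenNM : ∀ e ∈ Meven, e ∉ M := by
    intro e he
    obtain ⟨j, hj, rfl⟩ := (hmemE e).mp he
    exact (hout j hj).2
  -- key lemmas about vertices of the path being matched only along the path
  have key1 : ∀ e ∈ M, e ∉ Modd → ∀ j ≤ k, e.1 = b j → False := by
    intro e heM heO j hj h1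
    rcases Nat.lt_or_ge j k with hjk | hjk
    · have heq := hM.1.2.1 e heM (b j, a (j+1)) (hin j hjk) (by rw [h1])
      exact heO (by rw [heq]; exact (hmemO _).mpr ⟨j, hjk, rfl⟩)
    · have hjek : j = k := by omega
      subst hjek
      obtain ⟨e1, e2⟩ := e
      simp only at h1
      subst h1
      exact hbk e2 heM
  have key2 : ∀ e ∈ M, e ∉ Modd → ∀ j ≤ k, e.2 = a j → False := by
    intro e heM heO j hj h2
    rcases Nat.eq_zero_or_pos j with hj0 | hj0
    · subst hj0
      obtain ⟨e1, e2⟩ := e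
      simp only at h2
      subst h2
      exact ha0 e1 heM
    · have hjk : j - 1 < k := by omega
      have hinj := hin (j-1) hjk
      have hj1 : j - 1 + 1 = j := by omega
      rw [hj1] at hinj
      have heq := hM.1.2.2 e heM (b (j-1), a j) hinj (by rw [h2])
      apply heO
      rw [heq]
      refine (hmemO _).mpr ⟨j - 1, hjk, ?_⟩
      rw [hj1]
  have hmatch' : IsMatching E M' := by
    refine ⟨?_, ?_, ?_⟩
    · intro e he
      rcases Finset.mem_union.mp he with h | h
      · exact hM.1.1 (Finset.mem_sdiff.mp h).1
      · obtain ⟨j, hj, rfl⟩ := (hmemE e).mp h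
        exact (hout j hj).1
    · intro e he e' he' h1
      rcases Finset.mem_union.mp he with h | h <;> rcases Finset.mem_union.mp he' with h' | h'
      · exact hM.1.2.1 e (Finset.mem_sdiff.mp h).1 e' (Finset.mem_sdiff.mp h').1 h1
      · obtain ⟨j, hj, hje⟩ := (hmemE e').mp h'
        obtain ⟨hm, hno⟩ := Finset.mem_sdiff.mp h
        exact (key1 e hm hno j hj (by rw [h1, ← hje])).elim
      · obtain ⟨j, hj, hje⟩ := (hmemE e).mp h
        obtain ⟨hm, hno⟩ := Finset.mem_sdiff.mp h'
        exact (key1 e' hm hno j hj (by rw [← h1, ← hje])).elim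
      · obtain ⟨i, hi, hie⟩ := (hmemE e).mp h
        obtain ⟨j, hj, hje⟩ := (hmemE e').mp h'
        have : b i = b j := by
          have := congrArg Prod.fst hie
          have h2 := congrArg Prod.fst hje
          simp only at this h2
          rw [this, h2]; exact h1
        have hij : i = j := hb i hi j hj this
        rw [← hie, ← hje, hij]
    · intro e he e' he' h2
      rcases Finset.mem_union.mp he with h | h <;> rcases Finset.mem_union.mp he' with h' | h'
      · exact hM.1.2.2 e (Finset.mem_sdiff.mp h).1 e' (Finset.mem_sdiff.mp h').1 h2
      · obtain ⟨j, hj, hje⟩ := (hmemE e').mp h'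
        obtain ⟨hm, hno⟩ := Finset.mem_sdiff.mp h
        exact (key2 e hm hno j hj (by rw [h2, ← hje])).elim
      · obtain ⟨j, hj, hje⟩ := (hmemE e).mp h
        obtain ⟨hm, hno⟩ := Finset.mem_sdiff.mp h'
        exact (key2 e' hm hno j hj (by rw [← h2, ← hje])).elim
      · obtain ⟨i, hi, hie⟩ := (hmemE e).mp h
        obtain ⟨j, hj, hje⟩ := (hmemE e').mp h'
        have : a i = a j := by
          have := congrArg Prod.snd hie
          have hsnd := congrArg Prod.snd hje
          simp only at this hsnd
          rw [this, hsnd]; exact h2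
        have hij : i = j := ha i hi j hj this
        rw [← hie, ← hje, hij]
  -- cardinality
  have hdisj : Disjoint (M \ Modd) Meven := by
    rw [Finset.disjoint_right]
    intro e he hem
    exact hMevenNM e he (Finset.mem_sdiff.mp hem).1
  have hcardEven : Meven.card = k + 1 := by
    rw [hMeven, Finset.card_image_of_injOn, Finset.card_range]
    intro i hi j hj hij
    simp only [Finset.mem_coe, Finset.mem_range, Nat.lt_succ_iff] at hi hj
    exact hb i hi j hj (by have := congrArg Prod.fst hij; simpa using this)
  have hcardOdd : Modd.card ≤ k := by
    calc Modd.card ≤ (Finset.range k).card := Finset.card_image_le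
    _ = k := Finset.card_range k
  have hcard : M.card + 1 ≤ M'.card := by
    rw [hM', Finset.card_union_of_disjoint hdisj, Finset.card_sdiff_of_subset hModdM, hcardEven]
    have : Modd.card ≤ M.card := Finset.card_le_card hModdM
    omega
  have := hM.2 M' hmatch'
  omega

/-- No vertex lies in both `T_I` and `T_O` (maximum matching). -/
lemma not_both {E M : Finset (F × V)} (hM : IsMaxMatching E M) (x : F ⊕ V)
    (hI : x ∈ incompleteSet E M) (hO : x ∈ overcompleteSet E M) : False := by
  classical
  obtain ⟨v₀, hv₀, P, hPalt, hPhead, hPlast⟩ := hI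
  obtain ⟨f₀, hf₀, Q, hQalt, hQhead, hQlast⟩ := hO
  rw [isAltPath_iff] at hPalt hQalt
  have hPne := hPalt.1
  have hQne := hQalt.1
  have hPlen : 0 < P.length := List.length_pos_iff.mpr hPne
  have hQlen : 0 < Q.length := List.length_pos_iff.mpr hQne
  have hP0 : P[0]'hPlen = Sum.inr v₀ := by
    rw [head?_of_getElem hPne] at hPhead; exact Option.some.inj hPhead
  have hQ0 : Q[0]'hQlen = Sum.inl f₀ := by
    rw [head?_of_getElem hQne] at hQhead; exact Option.some.inj hQhead
  have hPend : P[P.length - 1]'(by omega) = x := by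
    rw [getLast?_of_getElem hPne] at hPlast; exact Option.some.inj hPlast
  have hQend : Q[Q.length - 1]'(by omega) = x := by
    rw [getLast?_of_getElem hQne] at hQlast; exact Option.some.inj hQlast
  have hPpar := edge_parity hPalt (start_unmatched_inr hv₀ hPlen hP0)
  have hQpar := edge_parity hQalt (start_unmatched_inl hf₀ hQlen hQ0)
  have hPtyp := type_alt_inr hPalt hP0
  have hQtyp := type_alt_inl hQalt hQ0
  -- first index of P that lies on Q
  have hex : ∃ i, ∃ h : i < P.length, P[i]'h ∈ Q := by
    refine ⟨P.length - 1, by omega, ?_⟩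
    rw [hPend, ← hQend]
    exact List.getElem_mem _
  have hexn : ∃ i, (fun i => ∃ h : i < P.length, P[i]'h ∈ Q) i := hex
  haveI : DecidablePred (fun i => ∃ h : i < P.length, P[i]'h ∈ Q) :=
    fun i => Classical.dec _
  set p := Nat.find hexn with hp_def
  obtain ⟨hpP, hpQ⟩ : ∃ h : p < P.length, P[p]'h ∈ Q := Nat.find_spec hexn
  have hmin : ∀ i < p, ¬ ∃ h : i < P.length, P[i]'h ∈ Q := fun i hi => Nat.find_min hexn hi
  obtain ⟨q, hqQ, hq⟩ := List.getElem_of_mem hpQ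
  -- parity : p + q is odd
  have hparity : (p + q) % 2 = 1 := by
    have h1 := hPtyp p hpP
    have h2 := hQtyp q hqQ
    rw [hq] at h2
    rw [h2] at h1
    by_cases hep : Even p <;> by_cases heq : Even q
    · simp [hep, heq] at h1
    · rw [Nat.even_iff] at hep heq
      omega
    · rw [Nat.even_iff] at hep heq
      omega
    · simp [hep, heq] at h1
  set k := (p + q) / 2 with hk_def
  have hpq : p + q = 2 * k + 1 := by omega
  -- the combined walk
  set r : ℕ → F ⊕ V := fun i => if i ≤ p then P.getD i x else Q.getD (q + p - i) x with hr_def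
  have hrP : ∀ i (h : i ≤ p), r i = P[i]'(by omega) := by
    intro i h
    simp only [hr_def, if_pos h]
    exact List.getD_eq_getElem P x (by omega)
  have hrQ : ∀ i (h1 : p ≤ i) (h2 : i ≤ p + q), r i = Q[q + p - i]'(by omega) := by
    intro i h1 h2
    rcases Nat.eq_or_lt_of_le h1 with heq | hlt
    · subst heq
      rw [hrP p (le_refl _)]
      have hQeq : Q[q + p - p]'(by omega) = Q[q]'hqQ := by
        congr 1 <;> omega
      rw [hQeq, hq]
    · have hni : ¬ i ≤ p := by omega
      simp only [hr_def, if_neg hni]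
      exact List.getD_eq_getElem Q x (by omega)
  have hr0 : r 0 = Sum.inr v₀ := by rw [hrP 0 (by omega)]; exact hP0
  have hrlast : r (p + q) = Sum.inl f₀ := by
    rw [hrQ (p+q) (by omega) (le_refl _)]
    have : q + p - (p + q) = 0 := by omega
    simp only [this]
    exact hQ0
  -- type alternation of r
  have hrtyp : ∀ i, i ≤ p + q → (r i).isRight = decide (Even i) := by
    intro i hi
    rcases le_or_gt i p with h | h
    · rw [hrP i h]; exact hPtyp i (by omega)
    · rw [hrQ i (by omega) hi]
      rw [hQtyp (q + p - i) (by omega)]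
      have : Even (q + p - i) ↔ ¬ Even i := by
        simp only [Nat.even_iff]
        omega
      by_cases he : Even i <;> simp [he, this]
  -- injectivity of r
  have hrinj : ∀ i ≤ p + q, ∀ j ≤ p + q, r i = r j → i = j := by
    intro i hi j hj hij
    rcases le_or_gt i p with h1 | h1 <;> rcases le_or_gt j p with h2 | h2
    · rw [hrP i h1, hrP j h2] at hij
      exact (List.Nodup.getElem_inj_iff hPalt.2.1).mp hij
    · rw [hrP i h1, hrQ j (by omega) hj] at hij
      rcases Nat.lt_or_ge i p with hip | hip
      · exact absurd ⟨by omega, by rw [hij]; exact List.getElem_mem _⟩ (hmin i hip)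
      · have hieq : i = p := by omega
        subst hieq
        rw [← hq] at hij
        have := (List.Nodup.getElem_inj_iff hQalt.2.1).mp hij
        omega
    · rw [hrQ i (by omega) hi, hrP j h2] at hij
      rcases Nat.lt_or_ge j p with hjp | hjp
      · exact absurd ⟨by omega, by rw [← hij]; exact List.getElem_mem _⟩ (hmin j hjp)
      · have hjeq : j = p := by omega
        subst hjeq
        rw [← hq] at hij
        have := (List.Nodup.getElem_inj_iff hQalt.2.1).mp hij
        omega
    · rw [hrQ i (by omega) hi, hrQ j (by omega) hj] at hij
      have := (List.Nodup.getElem_inj_iff hQalt.2.1).mp hij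
      omega
  -- adjacency along r
  have hradj : ∀ i, i < p + q → sumAdj E (r i) (r (i+1)) := by
    intro i hi
    rcases Nat.lt_or_ge i p with h | h
    · rw [hrP i (by omega), hrP (i+1) (by omega)]
      exact hPalt.2.2.1 i (by omega)
    · rw [hrQ i (by omega) (by omega), hrQ (i+1) (by omega) (by omega)]
      have hadj := hQalt.2.2.1 (q + p - (i+1)) (by omega)
      rw [sumAdj_swap]
      have heq2 : Q[q + p - (i+1) + 1]'(by omega) = Q[q + p - i]'(by omega) := by
        congr 1 <;> omega
      rw [← heq2]
      exact hadj
    -- edge membership parity along r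
  have hredge : ∀ i, i < p + q → (pairInM M (r i, r (i+1)) ↔ Odd i) := by
    intro i hi
    rcases Nat.lt_or_ge i p with h | h
    · rw [hrP i (by omega), hrP (i+1) (by omega)]
      exact hPpar i (by omega)
    · rw [hrQ i (by omega) (by omega), hrQ (i+1) (by omega) (by omega)]
      have hQp := hQpar (q + p - (i+1)) (by omega)
      have heq2 : Q[q + p - (i+1) + 1]'(by omega) = Q[q + p - i]'(by omega) := by
        congr 1 <;> omega
      rw [pairInM_swap, ← heq2, hQp]
      simp only [Nat.odd_iff]
      omega
  -- build the augmenting structure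
  have hV : V := v₀
  have hF : F := f₀
  set a : ℕ → V := fun j => Sum.elim (fun _ => v₀) id (r (2*j)) with ha_def
  set b : ℕ → F := fun j => Sum.elim id (fun _ => f₀) (r (2*j+1)) with hb_def
  have hra : ∀ j ≤ k, r (2*j) = Sum.inr (a j) := by
    intro j hj
    have h1 : (r (2*j)).isRight = true := by
      rw [hrtyp (2*j) (by omega)]
      simp [Nat.even_iff]
    obtain ⟨v, hv⟩ := Sum.isRight_iff.mp h1
    have hav : a j = v := by simp [ha_def, hv]
    rw [hav, hv]
  have hrb : ∀ j ≤ k, r (2*j+1) = Sum.inl (b j) := by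
    intro j hj
    have h1 : (r (2*j+1)).isRight = false := by
      rw [hrtyp (2*j+1) (by omega)]
      simp [Nat.even_iff, Nat.add_mod]
    obtain ⟨f, hf⟩ : ∃ f, r (2*j+1) = Sum.inl f := by
      rcases hrr : r (2*j+1) with f | v
      · exact ⟨f, rfl⟩
      · rw [hrr] at h1; simp at h1
    have hbf : b j = f := by simp [hb_def, hf]
    rw [hbf, hf]
  refine no_augmenting hM k a b ?_ ?_ ?_ ?_ ?_ ?_
  · intro i hi j hj hij
    have := hrinj (2*i) (by omega) (2*j) (by omega) (by rw [hra i hi, hra j hj, hij])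
    omega
  · intro i hi j hj hij
    have := hrinj (2*i+1) (by omega) (2*j+1) (by omega) (by rw [hrb i hi, hrb j hj, hij])
    omega
  · intro j hj
    have hadj := hradj (2*j) (by omega)
    have hedge := hredge (2*j) (by omega)
    rw [hra j hj] at hadj hedge
    rw [show 2*j+1 = 2*j+1 from rfl] at hadj
    rw [hrb j hj] at hadj hedge
    constructor
    · exact hadj
    · intro hc
      have : pairInM M (Sum.inr (a j), Sum.inl (b j)) := hc
      rw [hedge, Nat.odd_iff] at this
      omega
  · intro j hj
    have hedge := hredge (2*j+1) (by omega)
    rw [hrb j (by omega)] at hedge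
    have h22 : 2*j+1+1 = 2*(j+1) := by ring
    rw [h22, hra (j+1) (by omega)] at hedge
    have : pairInM M (Sum.inl (b j), Sum.inr (a (j+1))) := by
      rw [hedge, Nat.odd_iff]
      omega
    exact this
  · have : a 0 = v₀ := by
      have := hra 0 (by omega)
      simp only [Nat.mul_zero] at this
      rw [hr0] at this
      exact (Sum.inr.inj this).symm
    rwa [this]
  · have : b k = f₀ := by
      have := hrb k (le_refl _)
      rw [show 2*k+1 = p + q by omega, hrlast] at this
      exact (Sum.inl.inj this).symm
    rwa [this]


/-- no edge of `E` joins a vertex in `T_I ∩ V` with a vertex in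
`(T_C ∪ T_O) ∩ F`, and no edge of `E` joins a vertex in `T_C ∩ V` with a vertex
in `T_O ∩ F`. -/
theorem no_edges_between_parts (E M : Finset (F × V))
    (hM : IsMaxMatching E M) :
    (¬ ∃ f v, (f, v) ∈ E ∧ Sum.inr v ∈ incompleteSet E M ∧
        Sum.inl f ∈ completeSet E M ∪ overcompleteSet E M) ∧
    (¬ ∃ f v, (f, v) ∈ E ∧ Sum.inr v ∈ completeSet E M ∧
        Sum.inl f ∈ overcompleteSet E M) := by
  constructor
  · rintro ⟨f, v, hE, hvI, hf⟩
    have hfI := incomplete_extend hM.1 hE hvI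
    rcases hf with hfC | hfO
    · exact hfC.2 (Or.inl hfI)
    · exact not_both hM _ hfI hfO
  · rintro ⟨f, v, hE, hvC, hfO⟩
    exact hvC.2 (Or.inr (overcomplete_extend hM.1 hE hfO))
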